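/- Let n, Δ, δ be integers with 3 ≤ δ < Δ < n and δ+1 dividing n−Δ. Then the remoteness of G_{n,Δ,δ} = K_δ + K_1 + [K_1 + K_{δ−1} + K_1]^{k−1} + K_1 + K_{Δ−1} (with k = (n−Δ)/(δ+1)) satisfies ρ(G_{n,Δ,δ}) > (3/2)·(n² − Δ²)/((n−1)(δ+1)) − 3/2. -/

import Mathlib

open Finset

/-- The sequential sum of a list of complete graphs with the given orders:
vertices within a block are all adjacent, and all vertices of consecutive
blocks are joined. -/
def seqSum (Ls : List ℕ) : SimpleGraph (Σ i : Fin Ls.length, Fin (Ls.get i)) where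
  Adj x y := (x.1 = y.1 ∧ x ≠ y) ∨ x.1.val + 1 = y.1.val ∨ y.1.val + 1 = x.1.val
  symm := by
    constructor
    rintro x y (⟨h, hne⟩ | h | h)
    · exact Or.inl ⟨h.symm, fun e => hne e.symm⟩
    · exact Or.inr (Or.inr h)
    · exact Or.inr (Or.inl h)
  loopless := by
    constructor
    rintro x (⟨_, hne⟩ | h | h)
    · exact hne rfl
    · omega
    · omega


/-- The list of block orders of the graph
`K_δ + K_1 + [K_1 + K_{δ-1} + K_1]^{k-1} + K_1 + K_{Δ-1}`. -/
def blockSizes (Δ δ k : ℕ) : List ℕ :=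
  [δ, 1] ++ (List.replicate (k - 1) [1, δ - 1, 1]).flatten ++ [1, Δ - 1]

def wsum : List ℕ → ℕ
  | [] => 0
  | _ :: L => wsum L + L.sum

lemma sum_getD (L : List ℕ) : ∑ i ∈ range L.length, (L[i]?.getD 0) = L.sum := by
  induction L with
  | nil => simp
  | cons a L ih =>
    rw [List.length_cons, Finset.sum_range_succ']
    simp [ih]
    omega

lemma wsum_getD (L : List ℕ) : ∑ i ∈ range L.length, (L[i]?.getD 0) * i = wsum L := by
  induction L with
  | nil => simp [wsum]
  | cons a L ih =>
    rw [List.length_cons, Finset.sum_range_succ']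
    simp only [List.getElem?_cons_succ, List.getElem?_cons_zero, Option.getD_some, mul_zero,
      add_zero, mul_add, mul_one, Finset.sum_add_distrib, ih, sum_getD, wsum]

lemma wsum_append (L1 L2 : List ℕ) :
    wsum (L1 ++ L2) = wsum L1 + wsum L2 + L1.length * L2.sum := by
  induction L1 with
  | nil => simp [wsum]
  | cons a L1 ih =>
    simp only [List.cons_append, wsum, List.append_eq, ih, List.sum_append, List.length_cons,
      Nat.succ_mul]
    ring

lemma wsum_rep (δ m : ℕ) (hδ : 1 ≤ δ) :
    2 * wsum ((List.replicate m [1, δ-1, 1]).flatten) + (δ+1) * m = 3*(δ+1)*m*m := by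
  have hB : ([1, δ-1, 1] : List ℕ).sum = δ + 1 := by simp; omega
  induction m with
  | zero => simp [wsum]
  | succ m ih =>
    rw [List.replicate_succ, List.flatten_cons, wsum_append]
    have h1 : wsum [1, δ-1, 1] = δ + 1 := by simp [wsum]; omega
    have h2 : ((List.replicate m [1, δ-1, 1]).flatten).sum = (δ+1) * m := by
      rw [List.sum_flatten, List.map_replicate, hB, List.sum_replicate, smul_eq_mul, mul_comm]
    have hl : ([1, δ-1, 1] : List ℕ).length = 3 := rfl
    rw [h1, h2, hl]
    zify at ih ⊢
    linear_combination ih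

lemma walk_len_ge (Ls : List ℕ) {x y : Σ i : Fin Ls.length, Fin (Ls.get i)}
    (p : (seqSum Ls).Walk x y) : (y.1.val : ℤ) ≤ x.1.val + p.length := by
  induction p with
  | nil => simp
  | @cons x z y h p ih =>
    have hz : (z.1.val : ℤ) ≤ x.1.val + 1 := by
      rcases h with ⟨he, _⟩ | h | h
      · rw [he]; omega
      · omega
      · push_cast; omega
    rw [SimpleGraph.Walk.length_cons]
    push_cast
    omega

lemma seqSum_reach (Ls : List ℕ) (hpos : ∀ i : Fin Ls.length, 0 < Ls.get i)
    (h0 : 0 < Ls.length) (u : Σ i : Fin Ls.length, Fin (Ls.get i)) :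
    (seqSum Ls).Reachable ⟨⟨0, h0⟩, ⟨0, hpos _⟩⟩ u := by
  obtain ⟨i, a⟩ := u
  suffices H : ∀ j, ∀ (i : Fin Ls.length) (a : Fin (Ls.get i)), i.val = j →
      (seqSum Ls).Reachable ⟨⟨0, h0⟩, ⟨0, hpos _⟩⟩ ⟨i, a⟩ from H i.val i a rfl
  intro j
  induction j with
  | zero =>
    intro i a hi
    have hi0 : i = ⟨0, h0⟩ := Fin.ext hi
    subst hi0
    by_cases he : (⟨⟨0, h0⟩, ⟨0, hpos _⟩⟩ : Σ i : Fin Ls.length, Fin (Ls.get i)) = ⟨⟨0, h0⟩, a⟩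
    · rw [he]
    · exact SimpleGraph.Adj.reachable (Or.inl ⟨rfl, he⟩)
  | succ j ih =>
    intro i a hi
    have hj : j < Ls.length := by omega
    have hr := ih ⟨j, hj⟩ ⟨0, hpos _⟩ rfl
    refine hr.trans (SimpleGraph.Adj.reachable ?_)
    exact Or.inr (Or.inl (by simp [hi]))

lemma dist_ge (Ls : List ℕ) (hpos : ∀ i : Fin Ls.length, 0 < Ls.get i)
    (h0 : 0 < Ls.length) (u : Σ i : Fin Ls.length, Fin (Ls.get i)) :
    u.1.val ≤ (seqSum Ls).dist ⟨⟨0, h0⟩, ⟨0, hpos _⟩⟩ u := by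
  obtain ⟨p, hp⟩ := (seqSum_reach Ls hpos h0 u).exists_walk_length_eq_dist
  have := walk_len_ge Ls p
  rw [hp] at this
  simp at this
  omega

lemma sum_fst (L : List ℕ) :
    (∑ u : Σ i : Fin L.length, Fin (L.get i), u.1.val) = wsum L := by
  rw [← Finset.univ_sigma_univ, Finset.sum_sigma]
  have h1 : ∀ i : Fin L.length, (∑ _a : Fin (L.get i), i.val) = L.get i * i.val := by
    intro i; rw [Finset.sum_const, Finset.card_univ, Fintype.card_fin, smul_eq_mul]
  rw [Finset.sum_congr rfl fun i _ => h1 i]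
  calc ∑ i : Fin L.length, L.get i * i.val
      = ∑ i : Fin L.length, (L[(i : ℕ)]?.getD 0) * (i : ℕ) := by
        refine Finset.sum_congr rfl fun i _ => ?_
        rw [List.getElem?_eq_getElem i.2]
        simp [List.get_eq_getElem]
    _ = ∑ i ∈ range L.length, (L[i]?.getD 0) * i :=
        Fin.sum_univ_eq_sum_range (fun i => L[i]?.getD 0 * i) L.length
    _ = wsum L := wsum_getD L

lemma wsum_blockSizes' (Δ δ m : ℕ) (hδ : 1 ≤ δ) (hΔ : 1 ≤ Δ) :
    2 * wsum ([δ, 1] ++ (List.replicate m [1, δ - 1, 1]).flatten ++ [1, Δ - 1]) =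
      3*(δ+1)*(m*m+m) + 6*Δ*(m+1) := by
  rw [wsum_append, wsum_append]
  have hF2 := wsum_rep δ m hδ
  have hFs : ((List.replicate m [1, δ-1, 1]).flatten).sum = (δ+1) * m := by
    rw [List.sum_flatten, List.map_replicate]
    have hB : ([1, δ-1, 1] : List ℕ).sum = δ + 1 := by simp; omega
    rw [hB, List.sum_replicate, smul_eq_mul, mul_comm]
  have hFl : ((List.replicate m [1, δ-1, 1]).flatten).length = 3 * m := by
    rw [List.length_flatten, List.map_replicate]
    have : ([1, δ-1, 1] : List ℕ).length = 3 := rfl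
    rw [this, List.sum_replicate, smul_eq_mul, mul_comm]
  have h1 : wsum [δ, 1] = 1 := by simp [wsum]
  have h2 : wsum [1, Δ - 1] = Δ - 1 := by simp [wsum]
  have h3 : ([1, Δ - 1] : List ℕ).sum = Δ := by simp; omega
  have h4 : ([δ, 1] : List ℕ).length = 2 := rfl
  rw [List.length_append, h1, h2, h3, h4, hFs, hFl]
  zify [hΔ] at hF2 ⊢
  linear_combination hF2

/-- Some vertex of `G_{n,Δ,δ}` has average distance greater than
`(3/2)(n²-Δ²)/((n-1)(δ+1)) - 3/2`; i.e. the remoteness exceeds this bound. -/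
theorem seqSum_remoteness_lower_bound (n Δ δ : ℕ) (hδ3 : 3 ≤ δ) (hδΔ : δ < Δ)
    (hΔn : Δ < n) (hdvd : (δ + 1) ∣ (n - Δ))
    (k : ℕ) (hk : k = (n - Δ) / (δ + 1)) :
    ∃ v : (Σ i : Fin (blockSizes Δ δ k).length, Fin ((blockSizes Δ δ k).get i)),
      (∑ u, ((seqSum (blockSizes Δ δ k)).dist v u : ℝ)) / ((n : ℝ) - 1) >
        3 / 2 * ((n : ℝ) ^ 2 - (Δ : ℝ) ^ 2) / (((n : ℝ) - 1) * ((δ : ℝ) + 1)) - 3 / 2 := by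
  have hΔ4 : 4 ≤ Δ := by omega
  obtain ⟨c, hc⟩ := hdvd
  have hkc : k = c := by rw [hk, hc, Nat.mul_div_cancel_left _ (by omega : 0 < δ + 1)]
  have hn : n = (δ + 1) * k + Δ := by
    rw [hkc]; exact (Nat.sub_eq_iff_eq_add hΔn.le).mp hc
  have hk1 : 1 ≤ k := by
    rcases Nat.eq_zero_or_pos k with h | h
    · rw [h, Nat.mul_zero] at hn; omega
    · exact h
  obtain ⟨m, rfl⟩ : ∃ m, k = m + 1 := ⟨k - 1, by omega⟩
  set L := blockSizes Δ δ (m + 1) with hL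
  have hlen0 : 0 < L.length := by simp [hL, blockSizes]
  have hall : ∀ x ∈ L, 0 < x := by
    intro x hx
    rw [hL] at hx
    simp only [blockSizes, List.mem_append, List.mem_cons, List.mem_flatten,
      List.mem_replicate, List.not_mem_nil, or_false] at hx
    rcases hx with ((h | h) | ⟨l, ⟨-, rfl⟩, h⟩) | (h | h)
    · omega
    · omega
    · simp only [List.mem_cons, List.not_mem_nil, or_false] at h
      omega
    · omega
    · omega
  have hpos : ∀ i : Fin L.length, 0 < L.get i := fun i => hall _ (L.get_mem i)
  refine ⟨⟨⟨0, hlen0⟩, ⟨0, hpos _⟩⟩, ?_⟩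
  have h2w : 2 * wsum L = 3*(δ+1)*(m*m+m) + 6*Δ*(m+1) := by
    rw [hL]
    show 2 * wsum ([δ, 1] ++ (List.replicate (m + 1 - 1) [1, δ - 1, 1]).flatten ++ [1, Δ - 1]) = _
    rw [Nat.add_sub_cancel]
    exact wsum_blockSizes' Δ δ m (by omega) (by omega)
  have hWle : (wsum L : ℝ) ≤ ∑ u, ((seqSum L).dist ⟨⟨0, hlen0⟩, ⟨0, hpos _⟩⟩ u : ℝ) := by
    have h1 : wsum L ≤ ∑ u, (seqSum L).dist ⟨⟨0, hlen0⟩, ⟨0, hpos _⟩⟩ u := by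
      rw [← sum_fst L]
      exact Finset.sum_le_sum fun u _ => dist_ge L hpos hlen0 u
    calc (wsum L : ℝ) ≤ ((∑ u, (seqSum L).dist ⟨⟨0, hlen0⟩, ⟨0, hpos _⟩⟩ u : ℕ) : ℝ) := by
          exact_mod_cast h1
      _ = _ := by push_cast; rfl
  have hN : (0:ℝ) < (n:ℝ) - 1 := by
    have h5 : 5 ≤ n := by omega
    have : (5:ℝ) ≤ (n:ℝ) := by exact_mod_cast h5
    linarith
  rw [gt_iff_lt, lt_div_iff₀ hN]
  refine lt_of_lt_of_le ?_ hWle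
  have hnR : (n:ℝ) = ((δ:ℝ)+1) * ((m:ℝ)+1) + (Δ:ℝ) := by
    rw [hn]; push_cast; ring
  have h2wR : 2 * (wsum L : ℝ) = 3*((δ:ℝ)+1)*((m:ℝ)*(m:ℝ)+(m:ℝ)) + 6*(Δ:ℝ)*((m:ℝ)+1) := by
    exact_mod_cast h2w
  have hD : (0:ℝ) < (δ:ℝ)+1 := by positivity
  have hΔR : (4:ℝ) ≤ (Δ:ℝ) := by exact_mod_cast hΔ4
  have hid : (2*(wsum L : ℝ) + 3*((n:ℝ)-1))*((δ:ℝ)+1) - 3*((n:ℝ)^2 - (Δ:ℝ)^2)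
      = 3*((Δ:ℝ)-1)*((δ:ℝ)+1) := by
    rw [h2wR, hnR]; ring
  have hpos2 : (0:ℝ) < (2*(wsum L : ℝ) + 3*((n:ℝ)-1))*((δ:ℝ)+1) - 3*((n:ℝ)^2 - (Δ:ℝ)^2) := by
    rw [hid]; nlinarith
  rw [sub_mul, sub_lt_iff_lt_add, div_mul_eq_mul_div, div_lt_iff₀ (mul_pos hN hD)]
  nlinarith [mul_pos hN hpos2]
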